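/- For every standard Young tableau T of partition shape, slink_*(slink_*(T)) = T; i.e., slink_* is an involution on SYT(n). -/

import Mathlib

open scoped Classical

noncomputable section

/-- `T` is a standard Young tableau of shape `μ` with entries `1, …, n`.
Here `μ` is a Young diagram (Mathlib convention: row `0` is the longest row,
so the reading word below reads rows from the largest row index down to row `0`,
which corresponds to French notation read from the top row down), and `T` assigns
`0` to cells outside `μ`. -/
def IsSYT (n : ℕ) (μ : YoungDiagram) (T : ℕ × ℕ → ℕ) : Prop :=
  (∀ c, c ∉ μ → T c = 0) ∧
  Set.BijOn T (↑μ.cells) (Set.Icc 1 n) ∧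
  (∀ i j : ℕ, (i, j + 1) ∈ μ → T (i, j) < T (i, j + 1)) ∧
  (∀ i j : ℕ, (i + 1, j) ∈ μ → T (i, j) < T (i + 1, j))

/-- The value `u` occurs before the value `v` in the row reading word of `T`
(rows read from the top row down, each row left to right). -/
def Precedes (μ : YoungDiagram) (T : ℕ × ℕ → ℕ) (u v : ℕ) : Prop :=
  ∃ cu ∈ μ.cells, ∃ cv ∈ μ.cells,
    T cu = u ∧ T cv = v ∧ (cv.1 < cu.1 ∨ (cu.1 = cv.1 ∧ cu.2 < cv.2))

/-- Interchange the values `a` and `b` in the filling `T`. -/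
def swapVals (a b : ℕ) (T : ℕ × ℕ → ℕ) : ℕ × ℕ → ℕ :=
  fun c => if T c = a then b else if T c = b then a else T c

/-- The elementary dual equivalence `d_i` acting on fillings via the row reading
word: identity if `i` occurs between `i-1` and `i+1`; if `i-1` is in the middle it
swaps the values `i` and `i+1`; if `i+1` is in the middle it swaps `i-1` and `i`. -/
def dT (μ : YoungDiagram) (i : ℕ) (T : ℕ × ℕ → ℕ) : ℕ × ℕ → ℕ :=
  if (Precedes μ T i (i-1) ∧ Precedes μ T (i-1) (i+1)) ∨
     (Precedes μ T (i+1) (i-1) ∧ Precedes μ T (i-1) i) then swapVals i (i+1) T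
  else if (Precedes μ T i (i+1) ∧ Precedes μ T (i+1) (i-1)) ∨
     (Precedes μ T (i-1) (i+1) ∧ Precedes μ T (i+1) i) then swapVals (i-1) i T
  else T

/-- The index (1-based) of the run of `T` containing the value `v`: one plus the
number of inverse descents of the reading word of `T` that are smaller than `v`. -/
def runIdx (μ : YoungDiagram) (T : ℕ × ℕ → ℕ) (v : ℕ) : ℕ :=
  1 + ((Finset.Ico 1 v).filter (fun m => Precedes μ T (m+1) m)).card

/-- `b_j`, the largest value in the `j`-th run of `T`: the number of values in
`{1, …, n}` lying in the first `j` runs. -/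
def bsum (n : ℕ) (μ : YoungDiagram) (T : ℕ × ℕ → ℕ) (j : ℕ) : ℕ :=
  ((Finset.Icc 1 n).filter (fun v => runIdx μ T v ≤ j)).card

/-- `β_j(T)`, the size of the `j`-th run of `T`. -/
def betaRun (n : ℕ) (μ : YoungDiagram) (T : ℕ × ℕ → ℕ) (j : ℕ) : ℕ :=
  bsum n μ T j - bsum n μ T (j - 1)

/-- The first `j` runs of `T` form a superstandard tableau: every value `v` of the
first `j` runs lies in row `runIdx(v) - 1` (0-based; i.e. the `m`-th run fills the
`m`-th row from the bottom, in order). -/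
def FirstRunsSS (n : ℕ) (μ : YoungDiagram) (T : ℕ × ℕ → ℕ) (j : ℕ) : Prop :=
  ∀ v, 1 ≤ v → v ≤ n → runIdx μ T v ≤ j →
    ∀ c ∈ μ.cells, T c = v → c.1 = runIdx μ T v - 1

/-- `T` is the superstandard tableau `U_λ` of its shape: each run fills its row. -/
def IsSuperstandard (μ : YoungDiagram) (T : ℕ × ℕ → ℕ) : Prop :=
  ∀ c ∈ μ.cells, c.1 = runIdx μ T (T c) - 1

/-- `μ_r`, the number of cells in the `r`-th row (1-based) of the shape of the
first `j` runs of `T`. -/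
def shapeRow (μ : YoungDiagram) (T : ℕ × ℕ → ℕ) (j r : ℕ) : ℕ :=
  (μ.cells.filter (fun c => runIdx μ T (T c) ≤ j ∧ c.1 = r - 1)).card

/-- The cells of the `a`-th and `j`-th runs of `T` lying strictly below the `j`-th
row (1-based rows; row `j` has 0-based index `j - 1`). -/
def belowCells (μ : YoungDiagram) (T : ℕ × ℕ → ℕ) (a j : ℕ) : Finset (ℕ × ℕ) :=
  μ.cells.filter (fun c => (runIdx μ T (T c) = a ∨ runIdx μ T (T c) = j) ∧ c.1 + 1 < j)

/-- `T'` is obtained from `T` by permuting the cells of the `a`-th and `j`-th runs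
lying strictly below the `j`-th row, giving the first `k` of these cells (in row
reading order) to the `a`-th run and the rest to the `j`-th run; all other runs,
and the part of the `j`-th run weakly above the `j`-th row, keep their cells. -/
def Redistrib (μ : YoungDiagram) (T T' : ℕ × ℕ → ℕ) (a j k : ℕ) : Prop :=
  (∀ c ∈ μ.cells, runIdx μ T (T c) ≠ a → runIdx μ T (T c) ≠ j →
      runIdx μ T' (T' c) = runIdx μ T (T c)) ∧
  (∀ c ∈ μ.cells, runIdx μ T (T c) = j → j ≤ c.1 + 1 → runIdx μ T' (T' c) = j) ∧
  (∀ c ∈ belowCells μ T a j,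
      runIdx μ T' (T' c) =
        if ((belowCells μ T a j).filter
              (fun c' => c.1 < c'.1 ∨ (c'.1 = c.1 ∧ c'.2 < c.2))).card < k
        then a else j)

/-- The indices `i` and `j` from the definition of `slink` and `slink_*`:
`j` is minimal such that the first `j` runs of `T` do not form a superstandard
tableau, and `i` is minimal with `μ_{i+1} ≤ β_j(T) + i - j` (written additively to
avoid natural subtraction). -/
def SlinkData (n : ℕ) (μ : YoungDiagram) (T : ℕ × ℕ → ℕ) (i j : ℕ) : Prop :=
  1 ≤ j ∧ ¬ FirstRunsSS n μ T j ∧ (∀ j', j' < j → FirstRunsSS n μ T j') ∧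
  1 ≤ i ∧ shapeRow μ T j (i + 1) + j ≤ betaRun n μ T j + i ∧
  (∀ i', 1 ≤ i' → i' < i → betaRun n μ T j + i' < shapeRow μ T j (i' + 1) + j)

/-- `T' = slink_*(T)`: both are standard Young tableaux of a common shape; if `T`
is superstandard then `T' = T`, and otherwise `T'` is obtained by permuting the
cells of the `i`-th and `j`-th runs below the `j`-th row, giving the first
`β_j(T) + i - j` of them to the `i`-th run. -/
def SlinkStarRel (n : ℕ) (T T' : ℕ × ℕ → ℕ) : Prop :=
  ∃ μ : YoungDiagram, IsSYT n μ T ∧ IsSYT n μ T' ∧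
    ((IsSuperstandard μ T ∧ T' = T) ∨
     (¬ IsSuperstandard μ T ∧ ∃ i j, SlinkData n μ T i j ∧
        Redistrib μ T T' i j (betaRun n μ T j + i - j)))

/-- `T' = slink(T)`: both are standard Young tableaux of a common shape; if `T` is
superstandard then `T' = T`, and otherwise `T'` is obtained by permuting the cells
of the `(j-1)`-st and `j`-th runs below the `j`-th row, giving the first
`β_j(T) - 1` of them to the `(j-1)`-st run. -/
def SlinkRel (n : ℕ) (T T' : ℕ × ℕ → ℕ) : Prop :=
  ∃ μ : YoungDiagram, IsSYT n μ T ∧ IsSYT n μ T' ∧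
    ((IsSuperstandard μ T ∧ T' = T) ∨
     (¬ IsSuperstandard μ T ∧ ∃ i j, SlinkData n μ T i j ∧
        Redistrib μ T T' (j - 1) j (betaRun n μ T j - 1)))

namespace SlinkProof

/-- number of cells of `B` read strictly before `c`. -/
def posIn (B : Finset (ℕ × ℕ)) (c : ℕ × ℕ) : ℕ :=
  (B.filter (fun c' => c.1 < c'.1 ∨ (c'.1 = c.1 ∧ c'.2 < c.2))).card

/-- `rBef c d` : cell `c` is read (strictly) before cell `d` in the reading order. -/
def rBef (c d : ℕ × ℕ) : Prop := d.1 < c.1 ∨ (c.1 = d.1 ∧ c.2 < d.2)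

lemma rBef_trichot (c d : ℕ × ℕ) : c = d ∨ rBef c d ∨ rBef d c := by
  rcases c with ⟨a,b⟩; rcases d with ⟨e,f⟩
  simp only [rBef, Prod.mk.injEq]
  omega

lemma rBef_asymm {c d : ℕ × ℕ} (h : rBef c d) (h' : rBef d c) : False := by
  rcases c with ⟨a,b⟩; rcases d with ⟨e,f⟩
  simp only [rBef] at h h'; omega

lemma rBef_trans {c d e : ℕ × ℕ} (h : rBef c d) (h' : rBef d e) : rBef c e := by
  rcases c with ⟨a,b⟩; rcases d with ⟨x,y⟩; rcases e with ⟨u,v⟩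
  simp only [rBef] at *; omega

lemma precedes_def {μ : YoungDiagram} {T : ℕ × ℕ → ℕ} {u v : ℕ} :
    Precedes μ T u v ↔ ∃ cu ∈ μ.cells, ∃ cv ∈ μ.cells, T cu = u ∧ T cv = v ∧ rBef cu cv :=
  Iff.rfl

section OneSYT

variable {n : ℕ} {μ : YoungDiagram} {T : ℕ × ℕ → ℕ}

lemma mem_val (hT : IsSYT n μ T) {c : ℕ × ℕ} (hc : c ∈ μ.cells) : 1 ≤ T c ∧ T c ≤ n := by
  have := hT.2.1.mapsTo hc
  simpa [Set.mem_Icc] using this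

lemma cell_unique (hT : IsSYT n μ T) {c d : ℕ × ℕ} (hc : c ∈ μ.cells) (hd : d ∈ μ.cells)
    (h : T c = T d) : c = d :=
  hT.2.1.injOn hc hd h

lemma precedes_total (hT : IsSYT n μ T) {u v : ℕ} (hu : 1 ≤ u) (hun : u ≤ n) (hv : 1 ≤ v) (hvn : v ≤ n)
    (huv : u ≠ v) : Precedes μ T u v ∨ Precedes μ T v u := by
  obtain ⟨cu, hcu, hTu⟩ := hT.2.1.surjOn (show u ∈ Set.Icc 1 n by simp [hu, hun])
  obtain ⟨cv, hcv, hTv⟩ := hT.2.1.surjOn (show v ∈ Set.Icc 1 n by simp [hv, hvn])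
  rcases rBef_trichot cu cv with h | h | h
  · exact absurd ((h ▸ hTu).symm.trans hTv) huv
  · exact Or.inl ⟨cu, hcu, cv, hcv, hTu, hTv, h⟩
  · exact Or.inr ⟨cv, hcv, cu, hcu, hTv, hTu, h⟩

lemma precedes_asymm (hT : IsSYT n μ T) {u v : ℕ} (h : Precedes μ T u v) (h' : Precedes μ T v u) : False := by
  obtain ⟨cu, hcu, cv, hcv, hTu, hTv, hb⟩ := h
  obtain ⟨du, hdu, dv, hdv, hTu', hTv', hb'⟩ := h'
  have e1 : du = cv := cell_unique hT hdu hcv (by rw [hTu', hTv])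
  have e2 : dv = cu := cell_unique hT hdv hcu (by rw [hTv', hTu])
  exact rBef_asymm hb (by rwa [e1, e2] at hb')

lemma precedes_trans (hT : IsSYT n μ T) {u v w : ℕ} (h : Precedes μ T u v) (h' : Precedes μ T v w) :
    Precedes μ T u w := by
  obtain ⟨cu, hcu, cv, hcv, hTu, hTv, hb⟩ := h
  obtain ⟨du, hdu, dv, hdv, hTu', hTv', hb'⟩ := h'
  have e1 : du = cv := cell_unique hT hdu hcv (by rw [hTu', hTv])
  exact ⟨cu, hcu, dv, hdv, hTu, hTv', rBef_trans hb (e1 ▸ hb')⟩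

lemma precedes_irrefl (hT : IsSYT n μ T) {u : ℕ} (h : Precedes μ T u u) : False := precedes_asymm hT h h

end OneSYT

lemma runIdx_one {μ : YoungDiagram} {T : ℕ × ℕ → ℕ} : runIdx μ T 1 = 1 := by
  simp [runIdx]

lemma runIdx_pos {μ : YoungDiagram} {T : ℕ × ℕ → ℕ} (v : ℕ) : 1 ≤ runIdx μ T v := by
  simp [runIdx]

lemma runIdx_mono {μ : YoungDiagram} {T : ℕ × ℕ → ℕ} {u v : ℕ} (h : u ≤ v) :
    runIdx μ T u ≤ runIdx μ T v := by
  unfold runIdx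
  have : (Finset.Ico 1 u) ⊆ (Finset.Ico 1 v) := Finset.Ico_subset_Ico le_rfl h
  exact Nat.add_le_add_left (Finset.card_le_card (Finset.filter_subset_filter _ this)) 1

lemma runIdx_succ {μ : YoungDiagram} {T : ℕ × ℕ → ℕ} {v : ℕ} (hv : 1 ≤ v) :
    runIdx μ T (v + 1) =
      runIdx μ T v + (if Precedes μ T (v + 1) v then 1 else 0) := by
  unfold runIdx
  have h : Finset.Ico 1 (v + 1) = insert v (Finset.Ico 1 v) := by
    ext x; simp [Finset.mem_Ico]; omega
  rw [h, Finset.filter_insert]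
  split_ifs with hp
  · rw [Finset.card_insert_of_notMem (by simp)]
    omega
  · omega

lemma runIdx_succ_le {μ : YoungDiagram} {T : ℕ × ℕ → ℕ} (v : ℕ) :
    runIdx μ T (v + 1) ≤ runIdx μ T v + 1 := by
  rcases Nat.eq_zero_or_pos v with rfl | hv
  · simp [runIdx]
  · rw [runIdx_succ hv]; split_ifs <;> omega

end SlinkProof
namespace SlinkProof
section OneSYT2
variable {n : ℕ} {μ : YoungDiagram} {T : ℕ × ℕ → ℕ}

lemma precedes_of_sameRun (hT : IsSYT n μ T) {u w : ℕ} (hu : 1 ≤ u) (hw : w ≤ n)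
    (huw : u < w) (hrun : runIdx μ T u = runIdx μ T w) : Precedes μ T u w := by
  induction w with
  | zero => omega
  | succ v ih =>
    have hv1 : 1 ≤ v := by omega
    have hle1 : runIdx μ T u ≤ runIdx μ T v := runIdx_mono (by omega)
    have hle2 : runIdx μ T v ≤ runIdx μ T (v + 1) := runIdx_mono (by omega)
    have heqv : runIdx μ T v = runIdx μ T (v + 1) := by omega
    have hnp : ¬ Precedes μ T (v + 1) v := by
      intro hp
      rw [runIdx_succ hv1, if_pos hp] at heqv; omega
    have hpv : Precedes μ T v (v + 1) := by
      rcases precedes_total hT hv1 (by omega) (by omega) hw (by omega) with h | h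
      · exact h
      · exact absurd h hnp
    rcases Nat.lt_or_ge u v with h | h
    · exact precedes_trans hT (ih (by omega) h (by omega)) hpv
    · have : u = v := by omega
      exact this ▸ hpv

lemma runIdx_lt_of_gt_precedes (hT : IsSYT n μ T) {u w : ℕ} (hu : 1 ≤ u) (hw : w ≤ n)
    (huw : u < w) (h : Precedes μ T w u) : runIdx μ T u < runIdx μ T w := by
  rcases Nat.lt_or_ge (runIdx μ T u) (runIdx μ T w) with hlt | hge
  · exact hlt
  · have hle : runIdx μ T u ≤ runIdx μ T w := runIdx_mono (by omega)
    have heq : runIdx μ T u = runIdx μ T w := by omega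
    exact absurd (precedes_of_sameRun hT hu hw huw heq) (fun hp => precedes_asymm hT hp h)

lemma val_lt_right (hT : IsSYT n μ T) {r s : ℕ} (h : (r, s + 1) ∈ μ) :
    T (r, s) < T (r, s + 1) := hT.2.2.1 r s h

lemma val_lt_down (hT : IsSYT n μ T) {r s : ℕ} (h : (r + 1, s) ∈ μ) :
    T (r, s) < T (r + 1, s) := hT.2.2.2 r s h

lemma f_vert (hT : IsSYT n μ T) {r s : ℕ} (h : (r + 1, s) ∈ μ) :
    runIdx μ T (T (r, s)) < runIdx μ T (T (r + 1, s)) := by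
  have hm : (r, s) ∈ μ := μ.up_left_mem (by omega) le_rfl h
  have hv : T (r, s) < T (r + 1, s) := val_lt_down hT h
  apply runIdx_lt_of_gt_precedes hT
    (mem_val hT ((YoungDiagram.mem_cells _).2 hm)).1
    (mem_val hT ((YoungDiagram.mem_cells _).2 h)).2 hv
  exact ⟨(r + 1, s), (YoungDiagram.mem_cells _).2 h, (r, s), (YoungDiagram.mem_cells _).2 hm,
    rfl, rfl, Or.inl (by simp)⟩

lemma f_vert_chain (hT : IsSYT n μ T) {s : ℕ} : ∀ (d r : ℕ), (r + d, s) ∈ μ →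
    runIdx μ T (T (r, s)) + d ≤ runIdx μ T (T (r + d, s)) := by
  intro d
  induction d with
  | zero => intro r h; simp
  | succ d ih =>
    intro r h
    have e : r + (d + 1) = (r + d) + 1 := rfl
    rw [e] at h ⊢
    have h' : (r + d, s) ∈ μ := μ.up_left_mem (Nat.le_succ _) le_rfl h
    have h1 := f_vert hT h
    have h2 := ih r h'
    omega

lemma row_lt_f (hT : IsSYT n μ T) {c : ℕ × ℕ} (hc : c ∈ μ) :
    c.1 + 1 ≤ runIdx μ T (T c) := by
  obtain ⟨a, b⟩ := c
  have h0 : (0 + a, b) ∈ μ := by simpa using hc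
  have h1 := f_vert_chain hT a 0 h0
  have h2 := runIdx_pos (μ := μ) (T := T) (T (0, b))
  simp only [Nat.zero_add] at h1
  show a + 1 ≤ _
  omega

lemma f_horiz_chain (hT : IsSYT n μ T) {r : ℕ} {s s' : ℕ} (hss : s' ≤ s) (h : (r, s) ∈ μ) :
    runIdx μ T (T (r, s')) ≤ runIdx μ T (T (r, s)) := by
  induction s with
  | zero => have : s' = 0 := by omega
            subst this; exact le_rfl
  | succ v ih =>
    rcases Nat.lt_or_ge s' (v + 1) with hlt | hge
    · have h' : (r, v) ∈ μ := μ.up_left_mem le_rfl (by omega) h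
      have step : runIdx μ T (T (r, v)) ≤ runIdx μ T (T (r, v + 1)) :=
        runIdx_mono (le_of_lt (val_lt_right hT h))
      exact le_trans (ih (by omega) h') step
    · have : s' = v + 1 := by omega
      subst this; exact le_rfl

end OneSYT2

section Rigidity
variable {n : ℕ} {μ : YoungDiagram}

lemma val_eq_card_le {T : ℕ × ℕ → ℕ} (hT : IsSYT n μ T) {c : ℕ × ℕ} (hc : c ∈ μ.cells) :
    T c = (μ.cells.filter (fun d => T d ≤ T c)).card := by
  have hTc := mem_val hT hc
  have : (μ.cells.filter (fun d => T d ≤ T c)).card = (Finset.Icc 1 (T c)).card := by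
    apply Finset.card_bij (fun d _ => T d)
    · intro d hd
      simp only [Finset.mem_filter] at hd
      have := mem_val hT hd.1
      simp only [Finset.mem_Icc]; exact ⟨this.1, hd.2⟩
    · intro d hd e he h
      simp only [Finset.mem_filter] at hd he
      exact cell_unique hT hd.1 he.1 h
    · intro v hv
      simp only [Finset.mem_Icc] at hv
      obtain ⟨d, hd, hTd⟩ := hT.2.1.surjOn
        (show v ∈ Set.Icc 1 n by simp [hv.1, le_trans hv.2 hTc.2])
      refine ⟨d, ?_, hTd⟩
      simp only [Finset.mem_filter]
      exact ⟨hd, by rw [hTd]; exact hv.2⟩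
  rw [this, Nat.card_Icc]; omega

lemma val_lt_iff {T : ℕ × ℕ → ℕ} (hT : IsSYT n μ T) {c d : ℕ × ℕ}
    (hc : c ∈ μ.cells) (hd : d ∈ μ.cells) :
    T c < T d ↔ (runIdx μ T (T c) < runIdx μ T (T d) ∨
      (runIdx μ T (T c) = runIdx μ T (T d) ∧ rBef c d)) := by
  have hvc := mem_val hT hc
  have hvd := mem_val hT hd
  constructor
  · intro h
    have hle : runIdx μ T (T c) ≤ runIdx μ T (T d) := runIdx_mono (by omega)
    rcases Nat.lt_or_ge (runIdx μ T (T c)) (runIdx μ T (T d)) with hlt | hge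
    · exact Or.inl hlt
    · have heq : runIdx μ T (T c) = runIdx μ T (T d) := by omega
      refine Or.inr ⟨heq, ?_⟩
      have hp : Precedes μ T (T c) (T d) := precedes_of_sameRun hT hvc.1 hvd.2 h heq
      obtain ⟨cu, hcu, cv, hcv, hTu, hTv, hb⟩ := hp
      have e1 : cu = c := cell_unique hT hcu hc hTu
      have e2 : cv = d := cell_unique hT hcv hd hTv
      rwa [e1, e2] at hb
  · intro h
    rcases h with hlt | ⟨heq, hb⟩
    · by_contra hge
      push_neg at hge
      have := runIdx_mono (μ := μ) (T := T) hge
      omega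
    · by_contra hge
      push_neg at hge
      rcases Nat.lt_or_ge (T d) (T c) with hlt | hge2
      · have hp : Precedes μ T (T d) (T c) := precedes_of_sameRun hT hvd.1 hvc.2 hlt heq.symm
        obtain ⟨cu, hcu, cv, hcv, hTu, hTv, hb'⟩ := hp
        have e1 : cu = d := cell_unique hT hcu hd hTu
        have e2 : cv = c := cell_unique hT hcv hc hTv
        exact rBef_asymm hb (by rwa [e1, e2] at hb')
      · have : T c = T d := by omega
        have : c = d := cell_unique hT hc hd this
        subst this
        exact rBef_asymm hb hb

lemma rigidity {A B : ℕ × ℕ → ℕ} (hA : IsSYT n μ A) (hB : IsSYT n μ B)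
    (hf : ∀ c ∈ μ.cells, runIdx μ A (A c) = runIdx μ B (B c)) : A = B := by
  funext c
  by_cases hc : c ∈ μ.cells
  · rw [val_eq_card_le hA hc, val_eq_card_le hB hc]
    congr 1
    apply Finset.filter_congr
    intro d hd
    have h1 : A d ≤ A c ↔ (d = c ∨ A d < A c) := by
      constructor
      · intro h
        rcases Nat.lt_or_ge (A d) (A c) with h' | h'
        · exact Or.inr h'
        · exact Or.inl (cell_unique hA hd hc (by omega))
      · rintro (rfl | h) <;> omega
    have h2 : B d ≤ B c ↔ (d = c ∨ B d < B c) := by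
      constructor
      · intro h
        rcases Nat.lt_or_ge (B d) (B c) with h' | h'
        · exact Or.inr h'
        · exact Or.inl (cell_unique hB hd hc (by omega))
      · rintro (rfl | h) <;> omega
    rw [h1, h2, val_lt_iff hA hd hc, val_lt_iff hB hd hc, hf d hd, hf c hc]
  · rw [hA.1 c (fun h => hc ((YoungDiagram.mem_cells _).2 h)), hB.1 c (fun h => hc ((YoungDiagram.mem_cells _).2 h))]

end Rigidity
end SlinkProof
namespace SlinkProof
section Counting
variable {n : ℕ} {μ : YoungDiagram} {T : ℕ × ℕ → ℕ}

lemma card_filter_val (hT : IsSYT n μ T) (p : ℕ → Prop) [DecidablePred p] :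
    ((Finset.Icc 1 n).filter p).card = (μ.cells.filter (fun c => p (T c))).card := by
  symm
  apply Finset.card_bij (fun c _ => T c)
  · intro c hc
    simp only [Finset.mem_filter] at hc ⊢
    have := mem_val hT hc.1
    exact ⟨Finset.mem_Icc.2 this, hc.2⟩
  · intro c hc d hd h
    simp only [Finset.mem_filter] at hc hd
    exact cell_unique hT hc.1 hd.1 h
  · intro v hv
    simp only [Finset.mem_filter, Finset.mem_Icc] at hv
    obtain ⟨c, hc, hTc⟩ := hT.2.1.surjOn (show v ∈ Set.Icc 1 n by simp [hv.1.1, hv.1.2])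
    exact ⟨c, Finset.mem_filter.2 ⟨hc, by rw [hTc]; exact hv.2⟩, hTc⟩

lemma bsum_eq (hT : IsSYT n μ T) (m : ℕ) :
    bsum n μ T m = (μ.cells.filter (fun c => runIdx μ T (T c) ≤ m)).card := by
  unfold bsum
  exact card_filter_val hT _

lemma betaRun_eq (hT : IsSYT n μ T) {m : ℕ} (hm : 1 ≤ m) :
    betaRun n μ T m = (μ.cells.filter (fun c => runIdx μ T (T c) = m)).card := by
  unfold betaRun
  rw [bsum_eq hT, bsum_eq hT]
  have hsplit : μ.cells.filter (fun c => runIdx μ T (T c) ≤ m) =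
      (μ.cells.filter (fun c => runIdx μ T (T c) ≤ m - 1)) ∪
      (μ.cells.filter (fun c => runIdx μ T (T c) = m)) := by
    rw [← Finset.filter_or]
    apply Finset.filter_congr
    intro c _
    constructor
    · intro h; omega
    · intro h; omega
  rw [hsplit, Finset.card_union_of_disjoint]
  · omega
  · rw [Finset.disjoint_filter]
    intro c _ h1 h2
    omega

lemma firstRunsSS_iff (hT : IsSYT n μ T) (j : ℕ) :
    FirstRunsSS n μ T j ↔ ∀ c ∈ μ.cells, runIdx μ T (T c) ≤ j →
      c.1 = runIdx μ T (T c) - 1 := by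
  constructor
  · intro h c hc hle
    have hv := mem_val hT hc
    exact h (T c) hv.1 hv.2 hle c hc rfl
  · intro h v _ _ hle c hc hTc
    subst hTc
    exact h c hc hle

lemma ss_firstRunsSS {T : ℕ × ℕ → ℕ} (hss : IsSuperstandard μ T) (j : ℕ) :
    FirstRunsSS n μ T j := by
  intro v _ _ _ c hc hTc
  subst hTc
  exact hss c hc

lemma runIdx_ivt {m u : ℕ} (hu : 1 ≤ u) :
    ∀ w, u ≤ w → runIdx μ T u ≤ m → m ≤ runIdx μ T w →
    ∃ v, u ≤ v ∧ v ≤ w ∧ runIdx μ T v = m := by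
  intro w
  induction w with
  | zero =>
    intro huw h1 h2
    exact ⟨u, le_rfl, huw, by omega⟩
  | succ w ih =>
    intro huw h1 h2
    rcases Nat.lt_or_ge w u with hlt | hge
    · refine ⟨w + 1, by omega, le_rfl, ?_⟩
      have he : u = w + 1 := by omega
      rw [he] at h1
      omega
    · rcases le_or_gt m (runIdx μ T w) with h | h
      · obtain ⟨v, hv1, hv2, hv3⟩ := ih hge h1 h
        exact ⟨v, hv1, by omega, hv3⟩
      · have hle := runIdx_succ_le (μ := μ) (T := T) w
        exact ⟨w + 1, by omega, le_rfl, by omega⟩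

/-- values strictly increase along a row -/
lemma val_horiz_chain (hT : IsSYT n μ T) {r s s' : ℕ} (hss : s' < s) (h : (r, s) ∈ μ) :
    T (r, s') < T (r, s) := by
  induction s with
  | zero => omega
  | succ v ih =>
    have hv : T (r, v) < T (r, v + 1) := val_lt_right hT h
    rcases Nat.lt_or_ge s' v with hlt | hge
    · exact lt_trans (ih hlt (μ.up_left_mem le_rfl (by omega) h)) hv
    · have : s' = v := by omega
      subst this; exact hv

/-- a downward closed finset of naturals is an initial segment -/
lemma downward_closed_iff_lt_card {K : Finset ℕ} (hK : ∀ x ∈ K, ∀ y < x, y ∈ K) :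
    ∀ x, x ∈ K ↔ x < K.card := by
  intro x
  constructor
  · intro hx
    have hsub : Finset.range (x + 1) ⊆ K := by
      intro y hy
      simp only [Finset.mem_range] at hy
      rcases Nat.lt_or_ge y x with h | h
      · exact hK x hx y h
      · have : y = x := by omega
        subst this; exact hx
    have := Finset.card_le_card hsub
    simpa using this
  · intro hx
    by_contra hnx
    have hsub : K ⊆ Finset.range x := by
      intro y hy
      simp only [Finset.mem_range]
      rcases Nat.lt_or_ge y x with h | h
      · exact h
      · rcases Nat.eq_or_lt_of_le h with h' | h'
        · exact absurd (h' ▸ hy) hnx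
        · exact absurd (hK y hy x h') hnx
    have := Finset.card_le_card hsub
    simp only [Finset.card_range] at this
    omega

end Counting
end SlinkProof
namespace SlinkProof
section Main
variable {n i j : ℕ} {μ : YoungDiagram} {T T' : ℕ × ℕ → ℕ}

lemma frss_one (hT : IsSYT n μ T) : FirstRunsSS n μ T 1 := by
  rw [firstRunsSS_iff hT]
  intro c hc hle
  have h1 := runIdx_pos (μ := μ) (T := T) (T c)
  have h2 := row_lt_f hT ((YoungDiagram.mem_cells _).1 hc)
  omega

lemma run_row (hT : IsSYT n μ T) (hd : SlinkData n μ T i j) {m : ℕ} (hm : m < j)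
    {c : ℕ × ℕ} (hc : c ∈ μ.cells) (hf : runIdx μ T (T c) = m) : c.1 = m - 1 := by
  have hfr := hd.2.2.1 m hm
  rw [firstRunsSS_iff hT] at hfr
  have := hfr c hc (by omega)
  omega

lemma j_ge_two (hT : IsSYT n μ T) (hd : SlinkData n μ T i j) : 2 ≤ j := by
  have h1 := hd.1
  rcases Nat.lt_or_ge j 2 with h | h
  · have : j = 1 := by omega
    exact absurd (this ▸ frss_one hT) hd.2.1
  · exact h

lemma exists_runj (hT : IsSYT n μ T) (hd : SlinkData n μ T i j) :
    ∃ c ∈ μ.cells, runIdx μ T (T c) = j ∧ c.1 ≠ j - 1 := by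
  have hns := hd.2.1
  rw [firstRunsSS_iff hT] at hns
  push_neg at hns
  obtain ⟨c, hc, hle, hne⟩ := hns
  rcases Nat.eq_or_lt_of_le hle with heq | hlt
  · exact ⟨c, hc, heq, by rw [heq] at hne; exact hne⟩
  · exact absurd (run_row hT hd hlt hc rfl) hne

lemma run_nonempty (hT : IsSYT n μ T) (hd : SlinkData n μ T i j) {m : ℕ}
    (hm1 : 1 ≤ m) (hmj : m ≤ j) : ∃ c ∈ μ.cells, runIdx μ T (T c) = m := by
  obtain ⟨c0, hc0, hf0, _⟩ := exists_runj hT hd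
  have hw := mem_val hT hc0
  have hr1 : runIdx μ T 1 = 1 := runIdx_one
  obtain ⟨v, hv1, hv2, hv3⟩ := runIdx_ivt (μ := μ) (T := T) (m := m) (u := 1) le_rfl
    (T c0) hw.1 (by omega) (by omega)
  obtain ⟨d, hdm, hTd⟩ := hT.2.1.surjOn (show v ∈ Set.Icc 1 n by
    simp only [Set.mem_Icc]; omega)
  exact ⟨d, hdm, by rw [hTd]; exact hv3⟩

lemma betaRun_pos (hT : IsSYT n μ T) (hd : SlinkData n μ T i j) {m : ℕ}
    (hm1 : 1 ≤ m) (hmj : m ≤ j) : 1 ≤ betaRun n μ T m := by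
  rw [betaRun_eq hT hm1]
  obtain ⟨c, hc, hf⟩ := run_nonempty hT hd hm1 hmj
  have : c ∈ μ.cells.filter (fun c => runIdx μ T (T c) = m) := Finset.mem_filter.2 ⟨hc, hf⟩
  exact Finset.card_pos.2 ⟨c, this⟩

lemma runj_row (hT : IsSYT n μ T) (hd : SlinkData n μ T i j)
    {c : ℕ × ℕ} (hc : c ∈ μ.cells) (hf : runIdx μ T (T c) = j) : c.1 ≤ j - 1 := by
  have := row_lt_f hT ((YoungDiagram.mem_cells _).1 hc)
  omega

lemma runj_row_nonempty (hT : IsSYT n μ T) (hd : SlinkData n μ T i j) :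
    ∃ c ∈ μ.cells, runIdx μ T (T c) = j ∧ c.1 = j - 1 := by
  have hj2 := j_ge_two hT hd
  classical
  set S := (Finset.Icc 1 n).filter (fun v => runIdx μ T v = j) with hS
  have hne : S.Nonempty := by
    obtain ⟨c, hc, hf⟩ := run_nonempty hT hd hd.1 (le_refl j)
    exact ⟨T c, Finset.mem_filter.2 ⟨Finset.mem_Icc.2 ⟨(mem_val hT hc).1, (mem_val hT hc).2⟩, hf⟩⟩
  set v := S.min' hne with hv
  have hvS : v ∈ S := S.min'_mem hne
  rw [hS, Finset.mem_filter, Finset.mem_Icc] at hvS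
  obtain ⟨⟨hv1, hvn⟩, hrv⟩ := hvS
  have hv2 : 2 ≤ v := by
    rcases Nat.lt_or_ge v 2 with h | h
    · have : v = 1 := by omega
      rw [this, runIdx_one] at hrv; omega
    · exact h
  set u := v - 1 with hu
  have hu1 : 1 ≤ u := by omega
  have huv : u + 1 = v := by omega
  have hru_le : runIdx μ T u ≤ runIdx μ T v := runIdx_mono (by omega)
  have hru_ne : runIdx μ T u ≠ j := by
    intro h
    have : u ∈ S := Finset.mem_filter.2 ⟨Finset.mem_Icc.2 ⟨hu1, by omega⟩, h⟩
    have := S.min'_le u this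
    omega
  have hstep := runIdx_succ_le (μ := μ) (T := T) u
  rw [huv] at hstep
  have hru : runIdx μ T u = j - 1 := by omega
  have hprec : Precedes μ T v u := by
    by_contra hnp
    have h2 := runIdx_succ (μ := μ) (T := T) hu1
    rw [if_neg (show ¬ Precedes μ T (u + 1) u by rwa [huv]), huv] at h2
    omega
  obtain ⟨cv, hcv, cu, hcu, hTv, hTu, hb⟩ := hprec
  have hcu_row : cu.1 = j - 2 := by
    have := run_row hT hd (show j - 1 < j by omega) hcu (by rw [hTu]; exact hru)
    omega
  rcases hb with h | ⟨heq, hlt⟩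
  · refine ⟨cv, hcv, by rw [hTv]; exact hrv, ?_⟩
    have h1 := runj_row hT hd hcv (by rw [hTv]; exact hrv)
    omega
  · exfalso
    obtain ⟨a, b⟩ := cv
    obtain ⟨a', b'⟩ := cu
    simp only at heq hlt
    subst heq
    have hmem : (a, b') ∈ μ := (YoungDiagram.mem_cells _).1 hcu
    have := val_horiz_chain hT hlt hmem
    rw [hTv, hTu] at this
    omega

lemma shapeRow_pos (hT : IsSYT n μ T) (hd : SlinkData n μ T i j) {r : ℕ}
    (hr1 : 1 ≤ r) (hrj : r ≤ j) : 1 ≤ shapeRow μ T j r := by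
  unfold shapeRow
  rcases Nat.eq_or_lt_of_le hrj with heq | hlt
  · obtain ⟨c, hc, hf, hrow⟩ := runj_row_nonempty hT hd
    apply Finset.card_pos.2
    exact ⟨c, Finset.mem_filter.2 ⟨hc, by omega, by omega⟩⟩
  · obtain ⟨c, hc, hf⟩ := run_nonempty hT hd hr1 (by omega)
    have hrow := run_row hT hd hlt hc hf
    apply Finset.card_pos.2
    exact ⟨c, Finset.mem_filter.2 ⟨hc, by omega, hrow⟩⟩

lemma shapeRow_succ_j (hT : IsSYT n μ T) : shapeRow μ T j (j + 1) = 0 := by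
  unfold shapeRow
  rw [Finset.card_eq_zero, Finset.filter_eq_empty_iff]
  intro c hc h
  obtain ⟨hle, hrow⟩ := h
  have := row_lt_f hT ((YoungDiagram.mem_cells _).1 hc)
  omega

lemma shapeRow_j_le_betaj (hT : IsSYT n μ T) (hd : SlinkData n μ T i j) :
    shapeRow μ T j j ≤ betaRun n μ T j := by
  have hj2 := j_ge_two hT hd
  rw [betaRun_eq hT hd.1]
  unfold shapeRow
  apply Finset.card_le_card
  intro c hc
  rw [Finset.mem_filter] at hc ⊢
  obtain ⟨hcm, hle, hrow⟩ := hc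
  refine ⟨hcm, ?_⟩
  rcases Nat.eq_or_lt_of_le hle with heq | hlt
  · exact heq
  · have h1 := run_row hT hd hlt hcm rfl
    have h2 := runIdx_pos (μ := μ) (T := T) (T c)
    omega

lemma i_lt_j (hT : IsSYT n μ T) (hd : SlinkData n μ T i j) : i < j := by
  have hj2 := j_ge_two hT hd
  have hij : i ≤ j := by
    by_contra h
    push_neg at h
    have := hd.2.2.2.2.2 j hd.1 h
    rw [shapeRow_succ_j hT] at this
    omega
  rcases Nat.eq_or_lt_of_le hij with heq | hlt
  · exfalso
    subst heq
    have hmin := hd.2.2.2.2.2 (i - 1) (by omega) (by omega)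
    have hle2 := shapeRow_j_le_betaj hT hd
    have hsh : shapeRow μ T i (i - 1 + 1) = shapeRow μ T i i := by
      congr 1
      omega
    rw [hsh] at hmin
    have heqcard : betaRun n μ T i = shapeRow μ T i i := by omega
    -- sets are equal
    have hsub : (μ.cells.filter (fun c => runIdx μ T (T c) ≤ i ∧ c.1 = i - 1)) ⊆
        (μ.cells.filter (fun c => runIdx μ T (T c) = i)) := by
      intro c hc
      rw [Finset.mem_filter] at hc ⊢
      obtain ⟨hcm, hle, hrow⟩ := hc
      refine ⟨hcm, ?_⟩
      rcases Nat.eq_or_lt_of_le hle with heq | hlt'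
      · exact heq
      · have h1 := run_row hT hd hlt' hcm rfl
        have h2 := runIdx_pos (μ := μ) (T := T) (T c)
        omega
    have heqset := Finset.eq_of_subset_of_card_le hsub (by
      rw [← betaRun_eq hT hd.1]
      unfold shapeRow at heqcard
      omega)
    apply hd.2.1
    rw [firstRunsSS_iff hT]
    intro c hc hle
    rcases Nat.eq_or_lt_of_le hle with heq | hlt'
    · have : c ∈ μ.cells.filter (fun c => runIdx μ T (T c) = i) :=
        Finset.mem_filter.2 ⟨hc, heq⟩
      rw [← heqset, Finset.mem_filter] at this
      omega
    · exact run_row hT hd hlt' hc rfl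
  · exact hlt

lemma k_facts (hT : IsSYT n μ T) (hd : SlinkData n μ T i j) :
    1 ≤ betaRun n μ T j + i - j ∧ (betaRun n μ T j + i - j) + j = betaRun n μ T j + i := by
  have h1 := hd.2.2.2.2.1
  have hij := i_lt_j hT hd
  have h2 := shapeRow_pos hT hd (show 1 ≤ i + 1 by omega) (by omega)
  omega

end Main
end SlinkProof
namespace SlinkProof
section Main2
variable {n i j : ℕ} {μ : YoungDiagram} {T T' : ℕ × ℕ → ℕ}

lemma run_block (hT : IsSYT n μ T) (hd : SlinkData n μ T i j) {m : ℕ}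
    (hm1 : 1 ≤ m) (hmj : m < j) :
    (∀ s, s < betaRun n μ T m → (m - 1, s) ∈ μ ∧ runIdx μ T (T (m - 1, s)) = m) ∧
    (∀ c ∈ μ.cells, runIdx μ T (T c) = m → c.1 = m - 1 ∧ c.2 < betaRun n μ T m) := by
  classical
  set F := μ.cells.filter (fun c => runIdx μ T (T c) = m) with hF
  set K := F.image Prod.snd with hK
  have hmemF : ∀ c ∈ F, c = (m - 1, c.2) := by
    intro c hc
    rw [hF, Finset.mem_filter] at hc
    have h1 := run_row hT hd hmj hc.1 hc.2
    obtain ⟨a, b⟩ := c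
    simp only at h1
    rw [h1]
  have hcardK : K.card = betaRun n μ T m := by
    rw [hK, Finset.card_image_of_injOn, ← betaRun_eq hT hm1]
    intro c hc d hd' h
    rw [hmemF c (Finset.mem_coe.1 hc), hmemF d (Finset.mem_coe.1 hd')]
    exact congrArg (Prod.mk ((m : ℕ) - 1)) h
  have hdc : ∀ x ∈ K, ∀ y < x, y ∈ K := by
    intro x hx y hy
    rw [hK, Finset.mem_image] at hx
    obtain ⟨c, hc, hcx⟩ := hx
    have hc' := hc
    rw [hF, Finset.mem_filter] at hc'
    have hceq := hmemF c hc
    have hcm : ((m : ℕ) - 1, x) ∈ μ.cells := by rw [← hcx, ← hceq]; exact hc'.1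
    have hym : ((m : ℕ) - 1, y) ∈ μ := μ.up_left_mem le_rfl (by omega)
      ((YoungDiagram.mem_cells _).1 hcm)
    have hle : runIdx μ T (T (m - 1, y)) ≤ runIdx μ T (T (m - 1, x)) :=
      f_horiz_chain hT (by omega) ((YoungDiagram.mem_cells _).1 hcm)
    have hfx : runIdx μ T (T (m - 1, x)) = m := by
      rw [← hcx, ← hceq]; exact hc'.2
    have hfy : runIdx μ T (T (m - 1, y)) = m := by
      rcases Nat.eq_or_lt_of_le (show runIdx μ T (T (m-1,y)) ≤ m by omega) with h | h
      · exact h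
      · exfalso
        have := run_row hT hd (by omega) ((YoungDiagram.mem_cells _).2 hym) rfl
        have hpos := runIdx_pos (μ := μ) (T := T) (T (m-1, y))
        simp only at this
        omega
    rw [hK, Finset.mem_image]
    exact ⟨(m - 1, y), Finset.mem_filter.2 ⟨(YoungDiagram.mem_cells _).2 hym, hfy⟩, rfl⟩
  have hiff := downward_closed_iff_lt_card hdc
  constructor
  · intro s hs
    have : s ∈ K := (hiff s).2 (by omega)
    rw [hK, Finset.mem_image] at this
    obtain ⟨c, hc, hcs⟩ := this
    have hceq := hmemF c hc
    rw [hF, Finset.mem_filter] at hc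
    constructor
    · rw [← hcs, ← hceq]; exact (YoungDiagram.mem_cells _).1 hc.1
    · rw [← hcs, ← hceq]; exact hc.2
  · intro c hc hf
    have hcF : c ∈ F := Finset.mem_filter.2 ⟨hc, hf⟩
    have h1 := run_row hT hd hmj hc hf
    refine ⟨h1, ?_⟩
    have : c.2 ∈ K := Finset.mem_image.2 ⟨c, hcF, rfl⟩
    rw [hiff, hcardK] at this
    exact this

lemma shapeRow_step (hT : IsSYT n μ T) {r : ℕ} (hr : 1 ≤ r) :
    shapeRow μ T j (r + 1) ≤ shapeRow μ T j r := by
  unfold shapeRow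
  apply Finset.card_le_card_of_injOn (fun c => (c.1 - 1, c.2))
  · intro c hc
    rw [Finset.mem_coe, Finset.mem_filter] at hc
    rw [Finset.mem_coe, Finset.mem_filter]
    dsimp only
    obtain ⟨hcm, hle, hrow⟩ := hc
    have hrow' : c.1 = r := by omega
    have hc1 : (c.1 - 1, c.2) ∈ μ := μ.up_left_mem (by omega) le_rfl
      ((YoungDiagram.mem_cells _).1 hcm)
    refine ⟨(YoungDiagram.mem_cells _).2 hc1, ?_, by omega⟩
    have hv : runIdx μ T (T (c.1 - 1, c.2)) < runIdx μ T (T (c.1 - 1 + 1, c.2)) :=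
      f_vert hT (by
        rw [show c.1 - 1 + 1 = c.1 by omega, Prod.mk.eta]
        exact (YoungDiagram.mem_cells _).1 hcm)
    rw [show c.1 - 1 + 1 = c.1 by omega, Prod.mk.eta] at hv
    omega
  · intro c hc d hd' h
    simp only [Finset.coe_filter, Set.mem_setOf_eq] at hc hd'
    obtain ⟨a, b⟩ := c
    obtain ⟨a', b'⟩ := d
    simp only [Prod.mk.injEq] at h ⊢
    simp only at hc hd'
    omega

lemma shapeRow_antitone (hT : IsSYT n μ T) {r r' : ℕ} (hr : 1 ≤ r) (hrr : r ≤ r') :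
    shapeRow μ T j r' ≤ shapeRow μ T j r := by
  induction r' with
  | zero => omega
  | succ v ih =>
    rcases Nat.lt_or_ge r (v + 1) with h | h
    · exact le_trans (shapeRow_step hT (by omega)) (ih (by omega))
    · have : r = v + 1 := by omega
      subst this
      exact le_rfl

lemma beta_le_shapeRow_i (hT : IsSYT n μ T) (hd : SlinkData n μ T i j) :
    betaRun n μ T i ≤ shapeRow μ T j i := by
  have hij := i_lt_j hT hd
  rw [betaRun_eq hT hd.2.2.2.1]
  unfold shapeRow
  apply Finset.card_le_card
  intro c hc
  rw [Finset.mem_filter] at hc ⊢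
  obtain ⟨hcm, hf⟩ := hc
  exact ⟨hcm, by omega, run_row hT hd hij hcm hf⟩

lemma shapeRow_j_le_beta_i (hT : IsSYT n μ T) (hd : SlinkData n μ T i j) :
    shapeRow μ T j j ≤ betaRun n μ T i := by
  have hij := i_lt_j hT hd
  have hi1 := hd.2.2.2.1
  have hj2 := j_ge_two hT hd
  have hrb := (run_block hT hd hi1 hij).2
  unfold shapeRow
  have : (μ.cells.filter (fun c => runIdx μ T (T c) ≤ j ∧ c.1 = j - 1)).card ≤
      (Finset.range (betaRun n μ T i)).card := by
    apply Finset.card_le_card_of_injOn (fun c => c.2)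
    · intro c hc
      rw [Finset.mem_coe, Finset.mem_filter] at hc
      obtain ⟨hcm, hle, hrow⟩ := hc
      have hfj : runIdx μ T (T c) = j := by
        have := row_lt_f hT ((YoungDiagram.mem_cells _).1 hcm)
        omega
      -- the cell (i-1, c.2) is in μ and has run index i
      have hcmu : ((j : ℕ) - 1, c.2) ∈ μ := by
        rw [show ((j : ℕ) - 1, c.2) = c by ext <;> simp [hrow.symm]]
        exact (YoungDiagram.mem_cells _).1 hcm
      have him : ((i : ℕ) - 1, c.2) ∈ μ := μ.up_left_mem (by omega) le_rfl hcmu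
      have hchain := f_vert_chain hT (j - i) (i - 1) (by
        rw [show i - 1 + (j - i) = j - 1 by omega]
        exact hcmu)
      rw [show i - 1 + (j - i) = j - 1 by omega] at hchain
      have hfj' : runIdx μ T (T (j - 1, c.2)) = j := by
        rw [show ((j : ℕ) - 1, c.2) = c by ext <;> simp [hrow.symm]]
        exact hfj
      have hle2 : runIdx μ T (T (i - 1, c.2)) ≤ i := by omega
      have hge2 : runIdx μ T (T (i - 1, c.2)) = i := by
        rcases Nat.eq_or_lt_of_le hle2 with h | h
        · exact h
        · exfalso
          have := run_row hT hd (by omega) ((YoungDiagram.mem_cells _).2 him) rfl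
          have hpos := runIdx_pos (μ := μ) (T := T) (T (i - 1, c.2))
          simp only at this
          omega
      have := (hrb (i - 1, c.2) ((YoungDiagram.mem_cells _).2 him) hge2).2
      simp only [Finset.mem_coe, Finset.mem_range]
      simpa using this
    · intro c hc d hd' h
      simp only [Finset.coe_filter, Set.mem_setOf_eq] at hc hd'
      obtain ⟨a, b⟩ := c
      obtain ⟨a', b'⟩ := d
      simp only at h hc hd'
      simp only [Prod.mk.injEq]
      omega
  simpa using this

lemma beta_succ_le (hT : IsSYT n μ T) (hd : SlinkData n μ T i j) (hij : i + 1 < j) :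
    betaRun n μ T (i + 1) ≤ betaRun n μ T i := by
  by_contra h
  push_neg at h
  have hb1 := (run_block hT hd (show 1 ≤ i + 1 by omega) hij).1
  obtain ⟨hmem, hf⟩ := hb1 (betaRun n μ T i) h
  have hi1 := hd.2.2.2.1
  rw [show (i + 1 - 1 : ℕ) = i by omega] at hmem hf
  have him : ((i : ℕ) - 1, betaRun n μ T i) ∈ μ := μ.up_left_mem (by omega) le_rfl hmem
  have hvert : runIdx μ T (T (i - 1, betaRun n μ T i)) <
      runIdx μ T (T (i - 1 + 1, betaRun n μ T i)) := f_vert hT (by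
    rw [show (i : ℕ) - 1 + 1 = i by omega]; exact hmem)
  rw [show (i : ℕ) - 1 + 1 = i by omega] at hvert
  have hle2 : runIdx μ T (T (i - 1, betaRun n μ T i)) ≤ i := by omega
  have hge2 : runIdx μ T (T (i - 1, betaRun n μ T i)) = i := by
    rcases Nat.eq_or_lt_of_le hle2 with h' | h'
    · exact h'
    · exfalso
      have := run_row hT hd (show runIdx μ T (T (i - 1, betaRun n μ T i)) < j by omega)
        ((YoungDiagram.mem_cells _).2 him) rfl
      have hpos := runIdx_pos (μ := μ) (T := T) (T (i - 1, betaRun n μ T i))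
      simp only at this
      omega
  have := ((run_block hT hd hi1 (by omega)).2 (i - 1, betaRun n μ T i)
    ((YoungDiagram.mem_cells _).2 him) hge2).2
  simp only at this
  omega

end Main2
end SlinkProof
namespace SlinkProof
section Main3
variable {n i j : ℕ} {μ : YoungDiagram} {T T' : ℕ × ℕ → ℕ}

lemma mem_belowCells {a : ℕ} {c : ℕ × ℕ} :
    c ∈ belowCells μ T a j ↔ c ∈ μ.cells ∧
      (runIdx μ T (T c) = a ∨ runIdx μ T (T c) = j) ∧ c.1 + 1 < j := by
  unfold belowCells
  rw [Finset.mem_filter]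

lemma card_B (hT : IsSYT n μ T) (hd : SlinkData n μ T i j) :
    (belowCells μ T i j).card + shapeRow μ T j j =
      betaRun n μ T i + betaRun n μ T j := by
  classical
  have hij := i_lt_j hT hd
  have hi1 := hd.2.2.2.1
  have hj2 := j_ge_two hT hd
  have hBsplit : belowCells μ T i j =
      μ.cells.filter (fun c => runIdx μ T (T c) = i) ∪
      μ.cells.filter (fun c => runIdx μ T (T c) = j ∧ c.1 + 1 < j) := by
    unfold belowCells
    rw [← Finset.filter_or]
    apply Finset.filter_congr
    intro c hc
    constructor
    · rintro ⟨h1 | h1, h2⟩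
      · exact Or.inl h1
      · exact Or.inr ⟨h1, h2⟩
    · rintro (h1 | ⟨h1, h2⟩)
      · refine ⟨Or.inl h1, ?_⟩
        have := run_row hT hd hij hc h1
        omega
      · exact ⟨Or.inr h1, h2⟩
  have hA2split : μ.cells.filter (fun c => runIdx μ T (T c) = j) =
      μ.cells.filter (fun c => runIdx μ T (T c) = j ∧ c.1 + 1 < j) ∪
      μ.cells.filter (fun c => runIdx μ T (T c) ≤ j ∧ c.1 = j - 1) := by
    rw [← Finset.filter_or]
    apply Finset.filter_congr
    intro c hc
    constructor
    · intro h1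
      have := runj_row hT hd hc h1
      rcases Nat.lt_or_ge (c.1 + 1) j with h | h
      · exact Or.inl ⟨h1, h⟩
      · exact Or.inr ⟨by omega, by omega⟩
    · rintro (⟨h1, _⟩ | ⟨h1, h2⟩)
      · exact h1
      · rcases Nat.eq_or_lt_of_le h1 with h | h
        · exact h
        · exfalso
          have h3 := run_row hT hd h hc rfl
          have h4 := runIdx_pos (μ := μ) (T := T) (T c)
          omega
  have hdis1 : Disjoint (μ.cells.filter (fun c => runIdx μ T (T c) = i))
      (μ.cells.filter (fun c => runIdx μ T (T c) = j ∧ c.1 + 1 < j)) := by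
    rw [Finset.disjoint_filter]
    intro c _ h1 h2
    omega
  have hdis2 : Disjoint (μ.cells.filter (fun c => runIdx μ T (T c) = j ∧ c.1 + 1 < j))
      (μ.cells.filter (fun c => runIdx μ T (T c) ≤ j ∧ c.1 = j - 1)) := by
    rw [Finset.disjoint_filter]
    intro c _ h1 h2
    omega
  have h1 : (belowCells μ T i j).card =
      (μ.cells.filter (fun c => runIdx μ T (T c) = i)).card +
      (μ.cells.filter (fun c => runIdx μ T (T c) = j ∧ c.1 + 1 < j)).card := by
    rw [hBsplit, Finset.card_union_of_disjoint hdis1]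
  have h2 : (μ.cells.filter (fun c => runIdx μ T (T c) = j)).card =
      (μ.cells.filter (fun c => runIdx μ T (T c) = j ∧ c.1 + 1 < j)).card +
      (μ.cells.filter (fun c => runIdx μ T (T c) ≤ j ∧ c.1 = j - 1)).card := by
    rw [← Finset.card_union_of_disjoint hdis2, ← hA2split]
  rw [betaRun_eq hT hi1, betaRun_eq hT hd.1]
  unfold shapeRow
  omega

lemma k_lt_cardB (hT : IsSYT n μ T) (hd : SlinkData n μ T i j) :
    betaRun n μ T j + i - j < (belowCells μ T i j).card := by
  have h1 := card_B hT hd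
  have h2 := shapeRow_j_le_beta_i hT hd
  have h3 := (k_facts hT hd).2
  have hij := i_lt_j hT hd
  omega

lemma B_rows (hT : IsSYT n μ T) (hd : SlinkData n μ T i j) (hT' : IsSYT n μ T')
    (hR : Redistrib μ T T' i j (betaRun n μ T j + i - j)) :
    ∀ c ∈ belowCells μ T i j, c.1 + 1 ≤ i := by
  classical
  intro c hcB
  set B := belowCells μ T i j with hB
  have hne : (B.image Prod.fst).Nonempty := ⟨c.1, Finset.mem_image.2 ⟨c, hcB, rfl⟩⟩
  set r0 := (B.image Prod.fst).max' hne with hr0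
  have hr0max : ∀ d ∈ B, d.1 ≤ r0 := by
    intro d hd'
    exact Finset.le_max' _ _ (Finset.mem_image.2 ⟨d, hd', rfl⟩)
  have hr0mem := Finset.max'_mem (B.image Prod.fst) hne
  rw [Finset.mem_image] at hr0mem
  obtain ⟨c1, hc1, hc1r⟩ := hr0mem
  have hne2 : ((B.filter (fun d => d.1 = r0)).image Prod.snd).Nonempty :=
    ⟨c1.2, Finset.mem_image.2 ⟨c1, Finset.mem_filter.2 ⟨hc1, hc1r⟩, rfl⟩⟩
  set s0 := ((B.filter (fun d => d.1 = r0)).image Prod.snd).min' hne2 with hs0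
  have hs0min : ∀ d ∈ B, d.1 = r0 → s0 ≤ d.2 := by
    intro d hd' hdr
    exact Finset.min'_le _ _ (Finset.mem_image.2 ⟨d, Finset.mem_filter.2 ⟨hd', hdr⟩, rfl⟩)
  have hs0mem := Finset.min'_mem _ hne2
  rw [Finset.mem_image] at hs0mem
  obtain ⟨c2, hc2, hc2s⟩ := hs0mem
  rw [Finset.mem_filter] at hc2
  have hc0 : ((r0 : ℕ), s0) ∈ B := by
    have : c2 = (r0, s0) := by
      obtain ⟨a, b⟩ := c2
      simp only at hc2s
      have := hc2.2
      simp only at this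
      rw [this, hc2s]
    rw [← this]
    exact hc2.1
  have hfilter : (B.filter (fun c' => ((r0 : ℕ), s0).1 < c'.1 ∨
      (c'.1 = ((r0 : ℕ), s0).1 ∧ c'.2 < ((r0 : ℕ), s0).2))) = ∅ := by
    rw [Finset.filter_eq_empty_iff]
    intro d hd'
    simp only
    push_neg
    constructor
    · exact Nat.le_of_lt_succ (by
        have := hr0max d hd'
        omega)
    · intro hdr
      exact hs0min d hd' hdr
  have hk := (k_facts hT hd).1
  have := hR.2.2 ((r0 : ℕ), s0) hc0
  rw [hfilter] at this
  simp only [Finset.card_empty] at this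
  simp only [show 0 < betaRun n μ T j + i - j by omega, ↓reduceIte] at this
  have hrow := row_lt_f hT' ((YoungDiagram.mem_cells _).1 (by
    have := mem_belowCells.1 hc0
    exact this.1))
  rw [this] at hrow
  simp only at hrow
  have := hr0max c hcB
  omega

lemma B_row_mem (hT : IsSYT n μ T) (hd : SlinkData n μ T i j) {s : ℕ}
    (hm : ((i : ℕ) - 1, s) ∈ μ.cells) :
    ((i : ℕ) - 1, s) ∈ belowCells μ T i j ↔ runIdx μ T (T ((i : ℕ) - 1, s)) ≤ j := by
  have hij := i_lt_j hT hd
  have hi1 := hd.2.2.2.1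
  rw [mem_belowCells]
  constructor
  · rintro ⟨_, h1 | h1, _⟩ <;> omega
  · intro h1
    refine ⟨hm, ?_, by simp only; omega⟩
    rcases Nat.eq_or_lt_of_le h1 with h | h
    · exact Or.inr h
    · left
      have h2 := run_row hT hd h hm rfl
      have h3 := runIdx_pos (μ := μ) (T := T) (T ((i : ℕ) - 1, s))
      simp only at h2
      omega

lemma B_filter_row (hT : IsSYT n μ T) (hd : SlinkData n μ T i j) :
    (belowCells μ T i j).filter (fun c => c.1 = i - 1) =
      μ.cells.filter (fun c => runIdx μ T (T c) ≤ j ∧ c.1 = i - 1) := by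
  ext c
  rw [Finset.mem_filter, Finset.mem_filter, mem_belowCells]
  have hij := i_lt_j hT hd
  have hi1 := hd.2.2.2.1
  constructor
  · rintro ⟨⟨hcm, h1 | h1, h2⟩, h3⟩ <;> exact ⟨hcm, by omega, h3⟩
  · rintro ⟨hcm, h1, h2⟩
    obtain ⟨a, b⟩ := c
    simp only at h2
    subst h2
    exact ⟨mem_belowCells.1 ((B_row_mem hT hd hcm).2 h1), rfl⟩

lemma card_B_row (hT : IsSYT n μ T) (hd : SlinkData n μ T i j) :
    ((belowCells μ T i j).filter (fun c => c.1 = i - 1)).card = shapeRow μ T j i := by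
  rw [B_filter_row hT hd]
  rfl

lemma B_row_iff (hT : IsSYT n μ T) (hd : SlinkData n μ T i j) (s : ℕ) :
    ((i : ℕ) - 1, s) ∈ belowCells μ T i j ↔ s < shapeRow μ T j i := by
  classical
  set K := ((belowCells μ T i j).filter (fun c => c.1 = i - 1)).image Prod.snd with hK
  have hmemK : ∀ s', s' ∈ K ↔ ((i : ℕ) - 1, s') ∈ belowCells μ T i j := by
    intro s'
    rw [hK, Finset.mem_image]
    constructor
    · rintro ⟨c, hc, hcs⟩
      rw [Finset.mem_filter] at hc
      obtain ⟨a, b⟩ := c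
      obtain ⟨h1, h2⟩ := hc
      simp only at h2 hcs
      rw [← hcs, ← h2]
      exact h1
    · intro h
      exact ⟨((i : ℕ) - 1, s'), Finset.mem_filter.2 ⟨h, rfl⟩, rfl⟩
  have hcard : K.card = shapeRow μ T j i := by
    rw [hK, Finset.card_image_of_injOn, card_B_row hT hd]
    intro c hc d hd' h
    simp only [Finset.coe_filter, Set.mem_setOf_eq] at hc hd'
    obtain ⟨a, b⟩ := c
    obtain ⟨a', b'⟩ := d
    simp only at h hc hd' ⊢
    simp only [Prod.mk.injEq]
    exact ⟨by omega, h⟩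
  have hdc : ∀ x ∈ K, ∀ y < x, y ∈ K := by
    intro x hx y hy
    rw [hmemK] at hx ⊢
    have hxm := (mem_belowCells.1 hx).1
    have hymem : ((i : ℕ) - 1, y) ∈ μ := μ.up_left_mem le_rfl (by omega)
      ((YoungDiagram.mem_cells _).1 hxm)
    rw [B_row_mem hT hd ((YoungDiagram.mem_cells _).2 hymem)]
    have hxj := (B_row_mem hT hd hxm).1 hx
    have := f_horiz_chain hT (le_of_lt hy) ((YoungDiagram.mem_cells _).1 hxm)
    omega
  rw [← hmemK, downward_closed_iff_lt_card hdc, hcard]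

lemma pos_row (hT : IsSYT n μ T) (hd : SlinkData n μ T i j) (hT' : IsSYT n μ T')
    (hR : Redistrib μ T T' i j (betaRun n μ T j + i - j)) {s : ℕ}
    (hs : ((i : ℕ) - 1, s) ∈ belowCells μ T i j) :
    posIn (belowCells μ T i j) ((i : ℕ) - 1, s) = s := by
  unfold posIn
  classical
  have hrows := B_rows hT hd hT' hR
  have heq : (belowCells μ T i j).filter (fun c' => ((i : ℕ) - 1, s).1 < c'.1 ∨
      (c'.1 = ((i : ℕ) - 1, s).1 ∧ c'.2 < ((i : ℕ) - 1, s).2)) =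
      (Finset.range s).image (fun s' => ((i : ℕ) - 1, s')) := by
    ext d
    rw [Finset.mem_filter, Finset.mem_image]
    constructor
    · rintro ⟨hdB, h | ⟨h1, h2⟩⟩
      · exfalso
        have := hrows d hdB
        simp only at h
        omega
      · simp only at h1 h2
        refine ⟨d.2, Finset.mem_range.2 h2, ?_⟩
        obtain ⟨a, b⟩ := d
        simp only at h1 ⊢
        rw [h1]
    · rintro ⟨s', hs', rfl⟩
      rw [Finset.mem_range] at hs'
      have hsi := (B_row_iff hT hd s).1 hs
      refine ⟨(B_row_iff hT hd s').2 (by omega), ?_⟩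
      right
      exact ⟨rfl, by simpa using hs'⟩
  rw [heq, Finset.card_image_of_injective _ (fun a b h => by
    simpa using h), Finset.card_range]

lemma pos_low (hT : IsSYT n μ T) (hd : SlinkData n μ T i j) {c : ℕ × ℕ}
    (hc : c ∈ belowCells μ T i j) (hlow : c.1 + 1 < i) :
    shapeRow μ T j i ≤ posIn (belowCells μ T i j) c := by
  unfold posIn
  rw [← card_B_row hT hd]
  apply Finset.card_le_card
  intro d hd'
  rw [Finset.mem_filter] at hd' ⊢
  refine ⟨hd'.1, ?_⟩
  left
  have := hd'.2
  omega

lemma k_le_shapeRow_i (hT : IsSYT n μ T) (hd : SlinkData n μ T i j) (hT' : IsSYT n μ T')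
    (hR : Redistrib μ T T' i j (betaRun n μ T j + i - j)) :
    betaRun n μ T j + i - j ≤ shapeRow μ T j i := by
  have hi1 := hd.2.2.2.1
  rcases Nat.lt_or_ge 1 i with h | h
  · have hmin := hd.2.2.2.2.2 (i - 1) (by omega) (by omega)
    rw [show i - 1 + 1 = i by omega] at hmin
    have := (k_facts hT hd).2
    omega
  · have hi : i = 1 := by omega
    subst hi
    have hlt := k_lt_cardB hT hd
    have hrows := B_rows hT hd hT' hR
    have hBeq : (belowCells μ T 1 j).filter (fun c => c.1 = 1 - 1) = belowCells μ T 1 j := by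
      apply Finset.filter_true_of_mem
      intro c hc
      have := hrows c hc
      omega
    have := card_B_row hT hd
    rw [hBeq] at this
    omega

end Main3
end SlinkProof
namespace SlinkProof

section Main4
variable {n i j : ℕ} {μ : YoungDiagram} {T T' : ℕ × ℕ → ℕ}

lemma f_in_B (hT : IsSYT n μ T) (hd : SlinkData n μ T i j) {c : ℕ × ℕ}
    (hc : c ∈ μ.cells) (hf : runIdx μ T (T c) = i) : c ∈ belowCells μ T i j := by
  have hij := i_lt_j hT hd
  have hi1 := hd.2.2.2.1
  have := run_row hT hd hij hc hf
  exact mem_belowCells.2 ⟨hc, Or.inl hf, by omega⟩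

lemma fj_in_B (hT : IsSYT n μ T) (hd : SlinkData n μ T i j) {c : ℕ × ℕ}
    (hc : c ∈ μ.cells) (hf : runIdx μ T (T c) = j) (hrow : c.1 + 1 < j) :
    c ∈ belowCells μ T i j :=
  mem_belowCells.2 ⟨hc, Or.inr hf, hrow⟩

lemma redistrib_pos (hR : Redistrib μ T T' i j (betaRun n μ T j + i - j)) {c : ℕ × ℕ}
    (hc : c ∈ belowCells μ T i j) :
    runIdx μ T' (T' c) =
      if posIn (belowCells μ T i j) c < betaRun n μ T j + i - j then i else j :=
  hR.2.2 c hc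

/-- full case analysis for the run index of `T'` -/
lemma fprime_cover (hT : IsSYT n μ T) (hd : SlinkData n μ T i j)
    (hR : Redistrib μ T T' i j (betaRun n μ T j + i - j)) {c : ℕ × ℕ} (hc : c ∈ μ.cells) :
    (c ∈ belowCells μ T i j ∧ runIdx μ T' (T' c) =
      (if posIn (belowCells μ T i j) c < betaRun n μ T j + i - j then i else j)) ∨
    (c ∉ belowCells μ T i j ∧ runIdx μ T' (T' c) = runIdx μ T (T c) ∧
      runIdx μ T (T c) ≠ i ∧ (runIdx μ T (T c) = j → c.1 = j - 1)) := by
  have hj2 := j_ge_two hT hd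
  by_cases hB : c ∈ belowCells μ T i j
  · exact Or.inl ⟨hB, redistrib_pos hR hB⟩
  · right
    refine ⟨hB, ?_, ?_, ?_⟩
    · by_cases hfj : runIdx μ T (T c) = j
      · have hrow : ¬ (c.1 + 1 < j) := fun h => hB (fj_in_B hT hd hc hfj h)
        rw [hfj]
        exact hR.2.1 c hc hfj (by omega)
      · have hfi : runIdx μ T (T c) ≠ i := fun h => hB (f_in_B hT hd hc h)
        exact hR.1 c hc hfi hfj
    · exact fun h => hB (f_in_B hT hd hc h)
    · intro hfj
      have hrow : ¬ (c.1 + 1 < j) := fun h => hB (fj_in_B hT hd hc hfj h)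
      have := runj_row hT hd hc hfj
      omega

lemma fprime_le_j_iff (hT : IsSYT n μ T) (hd : SlinkData n μ T i j)
    (hR : Redistrib μ T T' i j (betaRun n μ T j + i - j)) {c : ℕ × ℕ} (hc : c ∈ μ.cells) :
    runIdx μ T' (T' c) ≤ j ↔ runIdx μ T (T c) ≤ j := by
  have hij := i_lt_j hT hd
  rcases fprime_cover hT hd hR hc with ⟨hB, heq⟩ | ⟨_, heq, _, _⟩
  · have hfb := (mem_belowCells.1 hB).2.1
    rw [heq]
    split_ifs <;> constructor <;> intro <;> omega
  · omega

lemma fprime_eq_i_iff (hT : IsSYT n μ T) (hd : SlinkData n μ T i j)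
    (hR : Redistrib μ T T' i j (betaRun n μ T j + i - j)) {c : ℕ × ℕ} (hc : c ∈ μ.cells) :
    runIdx μ T' (T' c) = i ↔
      (c ∈ belowCells μ T i j ∧ posIn (belowCells μ T i j) c < betaRun n μ T j + i - j) := by
  have hij := i_lt_j hT hd
  rcases fprime_cover hT hd hR hc with ⟨hB, heq⟩ | ⟨hB, heq, hne, _⟩
  · rw [heq]
    split_ifs with hpos
    · simp [hB, hpos]
    · constructor
      · intro h; omega
      · rintro ⟨_, h⟩; exact absurd h hpos
  · constructor
    · intro h; omega
    · rintro ⟨h, _⟩; exact absurd h hB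

lemma fprime_eq_j_iff (hT : IsSYT n μ T) (hd : SlinkData n μ T i j) (hT' : IsSYT n μ T')
    (hR : Redistrib μ T T' i j (betaRun n μ T j + i - j)) {c : ℕ × ℕ} (hc : c ∈ μ.cells) :
    runIdx μ T' (T' c) = j ↔
      ((runIdx μ T (T c) = j ∧ c.1 = j - 1) ∨
       (c ∈ belowCells μ T i j ∧
        betaRun n μ T j + i - j ≤ posIn (belowCells μ T i j) c)) := by
  have hij := i_lt_j hT hd
  have hj2 := j_ge_two hT hd
  rcases fprime_cover hT hd hR hc with ⟨hB, heq⟩ | ⟨hB, heq, hne, himp⟩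
  · have hbelow := (mem_belowCells.1 hB).2.2
    rw [heq]
    split_ifs with hpos
    · constructor
      · intro h; omega
      · rintro (⟨_, hrow⟩ | ⟨_, h⟩)
        · omega
        · omega
    · constructor
      · intro _; exact Or.inr ⟨hB, by omega⟩
      · intro _; rfl
  · constructor
    · intro h
      exact Or.inl ⟨by omega, himp (by omega)⟩
    · rintro (⟨h, _⟩ | ⟨h, _⟩)
      · omega
      · exact absurd h hB

lemma fprime_eq_m_iff (hT : IsSYT n μ T) (hd : SlinkData n μ T i j)
    (hR : Redistrib μ T T' i j (betaRun n μ T j + i - j)) {c : ℕ × ℕ} (hc : c ∈ μ.cells)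
    {m : ℕ} (hmi : m ≠ i) (hmj : m ≠ j) :
    runIdx μ T' (T' c) = m ↔ runIdx μ T (T c) = m := by
  have hij := i_lt_j hT hd
  rcases fprime_cover hT hd hR hc with ⟨hB, heq⟩ | ⟨hB, heq, _, _⟩
  · have hfb := (mem_belowCells.1 hB).2.1
    rw [heq]
    split_ifs <;> constructor <;> intro <;> omega
  · omega

lemma filter_posIn_lt (hT : IsSYT n μ T) (hd : SlinkData n μ T i j) (hT' : IsSYT n μ T')
    (hR : Redistrib μ T T' i j (betaRun n μ T j + i - j)) {K : ℕ}
    (hK : K ≤ shapeRow μ T j i) :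
    (belowCells μ T i j).filter (fun c => posIn (belowCells μ T i j) c < K) =
      (Finset.range K).image (fun s => ((i : ℕ) - 1, s)) := by
  classical
  ext d
  rw [Finset.mem_filter, Finset.mem_image]
  constructor
  · rintro ⟨hdB, hpos⟩
    have hrow := B_rows hT hd hT' hR d hdB
    rcases Nat.eq_or_lt_of_le hrow with heq | hlt
    · have hdeq : d = ((i : ℕ) - 1, d.2) := by
        obtain ⟨a, b⟩ := d
        simp only at heq ⊢
        rw [show a = i - 1 by omega]
      have hpos' : posIn (belowCells μ T i j) d = d.2 := by
        rw [hdeq]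
        exact pos_row hT hd hT' hR (hdeq ▸ hdB)
      exact ⟨d.2, Finset.mem_range.2 (by omega), hdeq.symm⟩
    · exfalso
      have := pos_low hT hd hdB (by omega)
      have : shapeRow μ T j i ≤ posIn (belowCells μ T i j) d := this
      omega
  · rintro ⟨s, hs, rfl⟩
    rw [Finset.mem_range] at hs
    have hmem : ((i : ℕ) - 1, s) ∈ belowCells μ T i j :=
      (B_row_iff hT hd s).2 (by omega)
    refine ⟨hmem, ?_⟩
    have := pos_row hT hd hT' hR hmem
    show posIn (belowCells μ T i j) ((i : ℕ) - 1, s) < K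
    omega

lemma card_posIn_lt (hT : IsSYT n μ T) (hd : SlinkData n μ T i j) (hT' : IsSYT n μ T')
    (hR : Redistrib μ T T' i j (betaRun n μ T j + i - j)) {K : ℕ}
    (hK : K ≤ shapeRow μ T j i) :
    ((belowCells μ T i j).filter (fun c => posIn (belowCells μ T i j) c < K)).card = K := by
  rw [filter_posIn_lt hT hd hT' hR hK,
    Finset.card_image_of_injective _ (fun a b h => by simpa using h), Finset.card_range]

end Main4
end SlinkProof
namespace SlinkProof
section Main5
variable {n i j : ℕ} {μ : YoungDiagram} {T T' : ℕ × ℕ → ℕ}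

lemma filter_j_row (hT : IsSYT n μ T) (hd : SlinkData n μ T i j) :
    μ.cells.filter (fun c => runIdx μ T (T c) = j ∧ c.1 = j - 1) =
      μ.cells.filter (fun c => runIdx μ T (T c) ≤ j ∧ c.1 = j - 1) := by
  have hj2 := j_ge_two hT hd
  apply Finset.filter_congr
  intro c hc
  constructor
  · rintro ⟨h1, h2⟩; exact ⟨by omega, h2⟩
  · rintro ⟨h1, h2⟩
    refine ⟨?_, h2⟩
    rcases Nat.eq_or_lt_of_le h1 with h | h
    · exact h
    · exfalso
      have h3 := run_row hT hd h hc rfl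
      have h4 := runIdx_pos (μ := μ) (T := T) (T c)
      omega

lemma card_posIn_ge (hT : IsSYT n μ T) (hd : SlinkData n μ T i j) (hT' : IsSYT n μ T')
    (hR : Redistrib μ T T' i j (betaRun n μ T j + i - j)) {K : ℕ}
    (hK : K ≤ shapeRow μ T j i) :
    ((belowCells μ T i j).filter (fun c => ¬ posIn (belowCells μ T i j) c < K)).card + K =
      (belowCells μ T i j).card := by
  have h1 := Finset.card_filter_add_card_filter_not
    (s := belowCells μ T i j) (p := fun c => posIn (belowCells μ T i j) c < K)
  rw [card_posIn_lt hT hd hT' hR hK] at h1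
  omega

lemma betaRun'_j (hT : IsSYT n μ T) (hd : SlinkData n μ T i j) (hT' : IsSYT n μ T')
    (hR : Redistrib μ T T' i j (betaRun n μ T j + i - j)) :
    betaRun n μ T' j + i = betaRun n μ T i + j := by
  classical
  have hij := i_lt_j hT hd
  have hkle := k_le_shapeRow_i hT hd hT' hR
  have hsplit : μ.cells.filter (fun c => runIdx μ T' (T' c) = j) =
      μ.cells.filter (fun c => runIdx μ T (T c) = j ∧ c.1 = j - 1) ∪
      (belowCells μ T i j).filter
        (fun c => ¬ posIn (belowCells μ T i j) c < betaRun n μ T j + i - j) := by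
    ext c
    rw [Finset.mem_union, Finset.mem_filter, Finset.mem_filter, Finset.mem_filter]
    constructor
    · rintro ⟨hc, hfj⟩
      rcases (fprime_eq_j_iff hT hd hT' hR hc).1 hfj with h | h
      · exact Or.inl ⟨hc, h⟩
      · exact Or.inr ⟨h.1, by omega⟩
    · rintro (⟨hc, h⟩ | ⟨hB, h⟩)
      · exact ⟨hc, (fprime_eq_j_iff hT hd hT' hR hc).2 (Or.inl h)⟩
      · have hc := (mem_belowCells.1 hB).1
        exact ⟨hc, (fprime_eq_j_iff hT hd hT' hR hc).2 (Or.inr ⟨hB, by omega⟩)⟩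
  have hdis : Disjoint (μ.cells.filter (fun c => runIdx μ T (T c) = j ∧ c.1 = j - 1))
      ((belowCells μ T i j).filter
        (fun c => ¬ posIn (belowCells μ T i j) c < betaRun n μ T j + i - j)) := by
    rw [Finset.disjoint_left]
    intro c hc1 hc2
    rw [Finset.mem_filter] at hc1 hc2
    have := (mem_belowCells.1 hc2.1).2.2
    have hj2 := j_ge_two hT hd
    omega
  have hgecard := card_posIn_ge hT hd hT' hR hkle
  have hcB := card_B hT hd
  have hkf := (k_facts hT hd).2
  have h2 : betaRun n μ T' j =
      (μ.cells.filter (fun c => runIdx μ T (T c) = j ∧ c.1 = j - 1)).card +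
      ((belowCells μ T i j).filter
        (fun c => ¬ posIn (belowCells μ T i j) c < betaRun n μ T j + i - j)).card := by
    rw [betaRun_eq hT' hd.1, hsplit, Finset.card_union_of_disjoint hdis]
  rw [filter_j_row hT hd] at h2
  have h3 : (μ.cells.filter (fun c => runIdx μ T (T c) ≤ j ∧ c.1 = j - 1)).card =
      shapeRow μ T j j := rfl
  omega

lemma shapeRow' (hT : IsSYT n μ T) (hd : SlinkData n μ T i j)
    (hR : Redistrib μ T T' i j (betaRun n μ T j + i - j)) (r : ℕ) :
    shapeRow μ T' j r = shapeRow μ T j r := by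
  unfold shapeRow
  congr 1
  apply Finset.filter_congr
  intro c hc
  rw [fprime_le_j_iff hT hd hR hc]

lemma frss' (hT : IsSYT n μ T) (hd : SlinkData n μ T i j) (hT' : IsSYT n μ T')
    (hR : Redistrib μ T T' i j (betaRun n μ T j + i - j)) {j' : ℕ} (hj' : j' < j) :
    FirstRunsSS n μ T' j' := by
  have hkle := k_le_shapeRow_i hT hd hT' hR
  have hi1 := hd.2.2.2.1
  rw [firstRunsSS_iff hT']
  intro c hc hle
  by_cases hfi : runIdx μ T' (T' c) = i
  · obtain ⟨hB, hpos⟩ := (fprime_eq_i_iff hT hd hR hc).1 hfi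
    have hrow := B_rows hT hd hT' hR c hB
    rcases Nat.eq_or_lt_of_le hrow with heq | hlt
    · omega
    · exfalso
      have := pos_low hT hd hB (by omega)
      omega
  · have hfm := (fprime_eq_m_iff hT hd hR hc hfi (by omega)).1 rfl
    have := run_row hT hd (by omega) hc hfm
    omega

lemma not_frss' (hT : IsSYT n μ T) (hd : SlinkData n μ T i j) (hT' : IsSYT n μ T')
    (hR : Redistrib μ T T' i j (betaRun n μ T j + i - j)) :
    ¬ FirstRunsSS n μ T' j := by
  classical
  have hkle := k_le_shapeRow_i hT hd hT' hR
  have hlt := k_lt_cardB hT hd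
  have hge := card_posIn_ge hT hd hT' hR hkle
  have hne : ((belowCells μ T i j).filter
      (fun c => ¬ posIn (belowCells μ T i j) c < betaRun n μ T j + i - j)).Nonempty := by
    rw [← Finset.card_pos]
    omega
  obtain ⟨c, hcmem⟩ := hne
  rw [Finset.mem_filter] at hcmem
  obtain ⟨hB, hpos⟩ := hcmem
  have hc := (mem_belowCells.1 hB).1
  have hbelow := (mem_belowCells.1 hB).2.2
  have hfj : runIdx μ T' (T' c) = j :=
    (fprime_eq_j_iff hT hd hT' hR hc).2 (Or.inr ⟨hB, by omega⟩)
  intro hfrss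
  rw [firstRunsSS_iff hT'] at hfrss
  have := hfrss c hc (by omega)
  have hj2 := j_ge_two hT hd
  omega

lemma shapeRow_i1_le_beta_i (hT : IsSYT n μ T) (hd : SlinkData n μ T i j)
    (hT' : IsSYT n μ T') (hR : Redistrib μ T T' i j (betaRun n μ T j + i - j)) :
    shapeRow μ T j (i + 1) ≤ betaRun n μ T i := by
  have hij := i_lt_j hT hd
  have hi1 := hd.2.2.2.1
  rcases Nat.eq_or_lt_of_le (show i + 1 ≤ j by omega) with heq | hlt
  · rw [heq]
    exact shapeRow_j_le_beta_i hT hd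
  · calc shapeRow μ T j (i + 1)
        ≤ betaRun n μ T (i + 1) := by
          rw [betaRun_eq hT (by omega)]
          apply Finset.card_le_card
          intro c hc
          rw [Finset.mem_filter] at hc ⊢
          obtain ⟨hcm, hle, hrow⟩ := hc
          refine ⟨hcm, ?_⟩
          rcases Nat.eq_or_lt_of_le hle with h | h
          · exfalso
            have hcB : c ∈ belowCells μ T i j :=
              fj_in_B hT hd hcm h (by omega)
            have := B_rows hT hd hT' hR c hcB
            omega
          · have := run_row hT hd h hcm rfl
            have h4 := runIdx_pos (μ := μ) (T := T) (T c)
            omega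
      _ ≤ betaRun n μ T i := beta_succ_le hT hd hlt

lemma slinkData' (hT : IsSYT n μ T) (hd : SlinkData n μ T i j) (hT' : IsSYT n μ T')
    (hR : Redistrib μ T T' i j (betaRun n μ T j + i - j)) :
    SlinkData n μ T' i j := by
  have hb' := betaRun'_j hT hd hT' hR
  have hij := i_lt_j hT hd
  refine ⟨hd.1, not_frss' hT hd hT' hR, fun j' hj' => frss' hT hd hT' hR hj',
    hd.2.2.2.1, ?_, ?_⟩
  · rw [shapeRow' hT hd hR]
    have := shapeRow_i1_le_beta_i hT hd hT' hR
    omega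
  · intro i' hi'1 hi'i
    rw [shapeRow' hT hd hR]
    have h1 : shapeRow μ T j i ≤ shapeRow μ T j (i' + 1) :=
      shapeRow_antitone hT (by omega) (by omega)
    have h2 := beta_le_shapeRow_i hT hd
    omega

lemma belowCells'_eq (hT : IsSYT n μ T) (hd : SlinkData n μ T i j) (hT' : IsSYT n μ T')
    (hR : Redistrib μ T T' i j (betaRun n μ T j + i - j)) :
    belowCells μ T' i j = belowCells μ T i j := by
  ext c
  rw [mem_belowCells, mem_belowCells]
  constructor
  · rintro ⟨hc, h | h, hb⟩
    · exact mem_belowCells.1 ((fprime_eq_i_iff hT hd hR hc).1 h).1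
    · rcases (fprime_eq_j_iff hT hd hT' hR hc).1 h with h' | h'
      · have hj2 := j_ge_two hT hd
        omega
      · exact mem_belowCells.1 h'.1
  · intro h
    have hB : c ∈ belowCells μ T i j := mem_belowCells.2 h
    have := redistrib_pos hR hB
    refine ⟨h.1, ?_, h.2.2⟩
    split_ifs at this with hp
    · exact Or.inl this
    · exact Or.inr this

lemma redistrib_rev (hT : IsSYT n μ T) (hd : SlinkData n μ T i j) (hT' : IsSYT n μ T')
    (hR : Redistrib μ T T' i j (betaRun n μ T j + i - j)) :
    Redistrib μ T' T i j (betaRun n μ T i) := by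
  have hij := i_lt_j hT hd
  have hi1 := hd.2.2.2.1
  have hble := beta_le_shapeRow_i hT hd
  have hrb := run_block hT hd hi1 hij
  refine ⟨?_, ?_, ?_⟩
  · intro c hc h1 h2
    rcases fprime_cover hT hd hR hc with ⟨hB, heq⟩ | ⟨hB, heq, _, _⟩
    · exfalso
      rw [heq] at h1 h2
      split_ifs at h1 h2 <;> simp_all
    · omega
  · intro c hc hfj hrow
    rcases (fprime_eq_j_iff hT hd hT' hR hc).1 hfj with h | h
    · exact h.1
    · exfalso
      have := (mem_belowCells.1 h.1).2.2
      omega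
  · intro c hcB'
    rw [belowCells'_eq hT hd hT' hR] at hcB'
    have hc := (mem_belowCells.1 hcB').1
    have hfor := (mem_belowCells.1 hcB').2.1
    have hposeq : ∀ d : ℕ × ℕ, ((belowCells μ T' i j).filter
        (fun c' => d.1 < c'.1 ∨ (c'.1 = d.1 ∧ c'.2 < d.2))).card =
        posIn (belowCells μ T i j) d := by
      intro d
      rw [belowCells'_eq hT hd hT' hR]
      rfl
    rw [hposeq]
    rcases hfor with hfi | hfj
    · obtain ⟨hrow, hcol⟩ := hrb.2 c hc hfi
      have hceq : c = ((i : ℕ) - 1, c.2) := by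
        obtain ⟨a, b⟩ := c
        simp only at hrow ⊢
        rw [hrow]
      have hpos : posIn (belowCells μ T i j) c = c.2 := by
        rw [hceq]
        exact pos_row hT hd hT' hR (hceq ▸ hcB')
      rw [if_pos (by omega)]
      exact hfi
    · have hgei : betaRun n μ T i ≤ posIn (belowCells μ T i j) c := by
        have hrows := B_rows hT hd hT' hR c hcB'
        rcases Nat.eq_or_lt_of_le hrows with heq | hlt
        · have hceq : c = ((i : ℕ) - 1, c.2) := by
            obtain ⟨a, b⟩ := c
            simp only at heq ⊢
            rw [show a = i - 1 by omega]
          have hpos : posIn (belowCells μ T i j) c = c.2 := by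
            rw [hceq]
            exact pos_row hT hd hT' hR (hceq ▸ hcB')
          have hcol : ¬ c.2 < betaRun n μ T i := by
            intro hcol
            obtain ⟨hm, hf⟩ := hrb.1 c.2 hcol
            have : ((i : ℕ) - 1, c.2) = c := hceq.symm
            rw [this] at hf
            omega
          omega
        · have := pos_low hT hd hcB' (by omega)
          omega
      rw [if_neg (by omega)]
      exact hfj

end Main5
end SlinkProof
namespace SlinkProof
section Assemble
variable {n i j : ℕ} {μ : YoungDiagram} {T T' : ℕ × ℕ → ℕ}

lemma shape_sub {A : ℕ × ℕ → ℕ} {ν : YoungDiagram} (h1 : IsSYT n μ A) (h2 : IsSYT n ν A) :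
    μ.cells ⊆ ν.cells := by
  intro c hc
  by_contra h
  have hz := h2.1 c (fun hm => h ((YoungDiagram.mem_cells _).2 hm))
  have := (mem_val h1 hc).1
  omega

lemma shape_unique {A : ℕ × ℕ → ℕ} {ν : YoungDiagram} (h1 : IsSYT n μ A)
    (h2 : IsSYT n ν A) : μ = ν := by
  ext c
  constructor
  · intro h
    exact (YoungDiagram.mem_cells _).1 (shape_sub h1 h2 ((YoungDiagram.mem_cells _).2 h))
  · intro h
    exact (YoungDiagram.mem_cells _).1 (shape_sub h2 h1 ((YoungDiagram.mem_cells _).2 h))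

lemma redistrib_pin {S X Y : ℕ × ℕ → ℕ} {a k : ℕ} (hX : IsSYT n μ X) (hY : IsSYT n μ Y)
    (hRX : Redistrib μ S X a j k) (hRY : Redistrib μ S Y a j k)
    (hcov : ∀ c ∈ μ.cells, runIdx μ S (S c) = a → c.1 + 1 < j) : X = Y := by
  apply rigidity hX hY
  intro c hc
  by_cases h1 : runIdx μ S (S c) = a
  · have hB : c ∈ belowCells μ S a j := mem_belowCells.2 ⟨hc, Or.inl h1, hcov c hc h1⟩
    rw [hRX.2.2 c hB, hRY.2.2 c hB]
  · by_cases h2 : runIdx μ S (S c) = j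
    · rcases Nat.lt_or_ge (c.1 + 1) j with h | h
      · have hB : c ∈ belowCells μ S a j := mem_belowCells.2 ⟨hc, Or.inr h2, h⟩
        rw [hRX.2.2 c hB, hRY.2.2 c hB]
      · rw [hRX.2.1 c hc h2 h, hRY.2.1 c hc h2 h]
    · rw [hRX.1 c hc h1 h2, hRY.1 c hc h1 h2]

lemma slinkData_unique {S : ℕ × ℕ → ℕ} (hd1 : SlinkData n μ S i j) {i' j' : ℕ}
    (hd2 : SlinkData n μ S i' j') : i = i' ∧ j = j' := by
  have hjj : j = j' := by
    rcases Nat.lt_trichotomy j j' with h | h | h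
    · exact absurd (hd2.2.2.1 j h) hd1.2.1
    · exact h
    · exact absurd (hd1.2.2.1 j' h) hd2.2.1
  subst hjj
  refine ⟨?_, rfl⟩
  rcases Nat.lt_trichotomy i i' with h | h | h
  · exfalso
    have := hd2.2.2.2.2.2 i hd1.2.2.2.1 h
    have h2 := hd1.2.2.2.2.1
    omega
  · exact h
  · exfalso
    have := hd1.2.2.2.2.2 i' hd2.2.2.2.1 h
    have h2 := hd2.2.2.2.2.1
    omega

end Assemble

theorem slinkStar_involutive_aux (n : ℕ) (T T' T'' : ℕ × ℕ → ℕ)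
    (h1 : SlinkStarRel n T T') (h2 : SlinkStarRel n T' T'') : T'' = T := by
  obtain ⟨μ, hT, hT', hcase⟩ := h1
  obtain ⟨μ₂, hT'b, hT'', hcase₂⟩ := h2
  have hμ : μ = μ₂ := shape_unique hT' hT'b
  subst hμ
  rcases hcase with ⟨hss, hTT⟩ | ⟨hnss, i, j, hd, hR⟩
  · subst hTT
    rcases hcase₂ with ⟨_, h⟩ | ⟨hnss2, _⟩
    · exact h
    · exact absurd hss hnss2
  · have hd' := slinkData' hT hd hT' hR
    have hrev := redistrib_rev hT hd hT' hR
    rcases hcase₂ with ⟨hss2, _⟩ | ⟨hnss2, i₂, j₂, hd₂, hR₂⟩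
    · exact absurd (ss_firstRunsSS hss2 j) (not_frss' hT hd hT' hR)
    · obtain ⟨hii, hjj⟩ := slinkData_unique hd' hd₂
      subst hii
      subst hjj
      have hk2 : betaRun n μ T' j + i - j = betaRun n μ T i := by
        have hb := betaRun'_j hT hd hT' hR
        have hij := i_lt_j hT hd
        omega
      rw [hk2] at hR₂
      have hcov : ∀ c ∈ μ.cells, runIdx μ T' (T' c) = i → c.1 + 1 < j := by
        intro c hc hfi
        exact (mem_belowCells.1 ((fprime_eq_i_iff hT hd hR hc).1 hfi).1).2.2
      exact redistrib_pin hT'' hT hR₂ hrev hcov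

end SlinkProof

/-- `slink_*` is an involution on standard Young tableaux:
`slink_*(slink_*(T)) = T`. -/
theorem slinkStar_involutive (n : ℕ) (T T' T'' : ℕ × ℕ → ℕ)
    (h1 : SlinkStarRel n T T') (h2 : SlinkStarRel n T' T'') :
    T'' = T :=
  SlinkProof.slinkStar_involutive_aux n T T' T'' h1 h2
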